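/- Let A, B be abelian groups and let φ : A → B be a function that is a morphism from the degree-i structure 𝒟_i(A) to the degree-j structure 𝒟_j(B), with i > j ≥ 0 and i,j ≥ 0. Then φ is constant. Concretely: if for every n and every map c : {0,1}ⁿ → A in Cⁿ(𝒟_i(A)), the composition φ∘c lies in Cⁿ(𝒟_j(B)), then φ is constant. -/

import Mathlib

/-- A cube morphism `{0,1}^m → {0,1}^n`: a map which extends to an affine
homomorphism `ℤ^m → ℤ^n`. -/
def IsCubeMorphism {m n : ℕ} (ψ : (Fin m → Bool) → (Fin n → Bool)) : Prop :=
  ∃ (L : (Fin m → ℤ) →ₗ[ℤ] (Fin n → ℤ)) (b : Fin n → ℤ),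
    ∀ v : Fin m → Bool,
      (fun i => (if ψ v i then 1 else 0 : ℤ)) =
        L (fun i => (if v i then 1 else 0 : ℤ)) + b

/-- `c : {0,1}^n → A` is a cube of the degree-`d` structure `𝒟_d(A)`:
for every cube morphism `ψ : {0,1}^{d+1} → {0,1}^n` the alternating sum of
`c ∘ ψ` vanishes. -/
def IsDegCube {A : Type*} [AddCommGroup A] (d n : ℕ) (c : (Fin n → Bool) → A) : Prop :=
  ∀ ψ : (Fin (d + 1) → Bool) → (Fin n → Bool), IsCubeMorphism ψ →
    ∑ v : Fin (d + 1) → Bool, ((-1 : ℤ) ^ (∑ i, if v i then 1 else 0)) • c (ψ v) = 0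

/-- Indicator vectors determine booleans. -/
lemma aux_ind_inj {n : ℕ} {p q : Fin n → Bool}
    (h : (fun i => (if p i then 1 else 0 : ℤ)) = fun i => (if q i then 1 else 0 : ℤ)) :
    p = q := by
  funext i
  have := congrFun h i
  cases hp : p i <;> cases hq : q i <;> simp_all

/-- Flipping one coordinate negates the sign. -/
lemma aux_sign_flip {m : ℕ} (v : Fin m → Bool) (k : Fin m) :
    ((-1 : ℤ) ^ (∑ i, if Function.update v k (!v k) i then 1 else 0))
      = -(-1 : ℤ) ^ (∑ i, if v i then 1 else 0) := by
  have hsplit : ∀ w : Fin m → Bool, (∑ i, if w i then (1 : ℕ) else 0)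
      = (if w k then 1 else 0) + ∑ i ∈ Finset.univ.erase k, (if w i then 1 else 0) := by
    intro w
    exact (Finset.add_sum_erase _ _ (Finset.mem_univ k)).symm
  rw [hsplit, hsplit v]
  have herase : (∑ i ∈ Finset.univ.erase k, if Function.update v k (!v k) i then (1:ℕ) else 0)
      = ∑ i ∈ Finset.univ.erase k, (if v i then 1 else 0) := by
    refine Finset.sum_congr rfl fun i hi => ?_
    rw [Function.update_of_ne (Finset.ne_of_mem_erase hi)]
  rw [herase, Function.update_self]
  cases hv : v k <;> simp [pow_add, pow_succ]

/-- If `ψ` does not depend on coordinate `k`, the alternating sum of `f ∘ ψ` vanishes. -/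
lemma aux_unused {A : Type*} [AddCommGroup A] {m n : ℕ}
    (ψ : (Fin m → Bool) → (Fin n → Bool)) (k : Fin m)
    (hψ : ∀ v x, ψ (Function.update v k x) = ψ v) (f : (Fin n → Bool) → A) :
    ∑ v : Fin m → Bool, ((-1 : ℤ) ^ (∑ i, if v i then 1 else 0)) • f (ψ v) = 0 := by
  classical
  refine Finset.sum_ninvolution (fun v => Function.update v k (!v k)) ?_ ?_
    (fun v => Finset.mem_univ _) ?_
  · intro v
    rw [hψ v (!v k), aux_sign_flip, neg_smul]
    exact add_neg_cancel _
  · intro v _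
    intro hcontra
    have := congrFun hcontra k
    simp only [Function.update_self] at this
    cases h : v k <;> simp [h] at this
  · intro v
    simp only [Function.update_idem, Function.update_self, Bool.not_not,
      Function.update_eq_self]

/-- Alternating sum of signs over a nonempty cube is zero. -/
lemma aux_sign_sum {m : ℕ} (hm : 0 < m) :
    ∑ v : Fin m → Bool, ((-1 : ℤ) ^ (∑ i, if v i then 1 else 0)) = 0 := by
  classical
  have := aux_unused (A := ℤ) (n := 0) (fun _ => (fun i => false)) ⟨0, hm⟩
    (fun v x => rfl) (fun _ => (1 : ℤ))
  simpa using this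

/-- A morphism from the degree-`i` structure `𝒟_i(A)` to the degree-`j`
structure `𝒟_j(B)` with `i > j` is constant. -/
theorem stmt_13 {A B : Type*} [AddCommGroup A] [AddCommGroup B] (i j : ℕ)
    (hij : i > j) (φ : A → B)
    (hφ : ∀ n : ℕ, ∀ c : (Fin n → Bool) → A, IsDegCube i n c → IsDegCube j n (φ ∘ c)) :
    ∀ a b : A, φ a = φ b := by
  classical
  intro a b
  set c : (Fin (j+1) → Bool) → A := fun v => if v = (fun _ => true) then a else b with hc
  -- Step 1: `c` is a cube of `𝒟_i(A)`, since any low-dimensional map is.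
  have hcube : IsDegCube i (j+1) c := by
    intro ψ hmor
    obtain ⟨L, b0, hLb⟩ := hmor
    -- Each row of L has at most one nonzero entry.
    have hrow : ∀ l : Fin (j+1), ∀ k k' : Fin (i+1), k ≠ k' →
        L (Pi.single k 1) l ≠ 0 → L (Pi.single k' 1) l ≠ 0 → False := by
      intro l k k' hkk' hM hM'
      set v00 : Fin (i+1) → Bool := fun _ => false with hv00
      set v10 := Function.update v00 k true with hv10
      set v01 := Function.update v00 k' true with hv01
      set v11 := Function.update v10 k' true with hv11
      have ind00 : (fun p => if v00 p then (1:ℤ) else 0) = 0 := by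
        funext p; simp [hv00]
      have ind10 : (fun p => if v10 p then (1:ℤ) else 0) = Pi.single k 1 := by
        funext p
        by_cases hp : p = k <;>
          simp [hv10, hv00, Function.update_apply, Pi.single_apply, hp, eq_comm]
      have ind01 : (fun p => if v01 p then (1:ℤ) else 0) = Pi.single k' 1 := by
        funext p
        by_cases hp : p = k' <;>
          simp [hv01, hv00, Function.update_apply, Pi.single_apply, hp, eq_comm]
      have ind11 : (fun p => if v11 p then (1:ℤ) else 0) = Pi.single k 1 + Pi.single k' 1 := by
        funext p
        by_cases hp' : p = k'
        · subst hp'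
          simp [hv11, hv10, hv00, Function.update_apply, Pi.single_apply, Ne.symm hkk']
        · by_cases hp : p = k
          · subst hp
            simp [hv11, hv10, hv00, Function.update_apply, Pi.single_apply, hp', hkk']
          · simp [hv11, hv10, hv00, Function.update_apply, Pi.single_apply, hp, hp']
      have e00 := congrFun (hLb v00) l
      have e10 := congrFun (hLb v10) l
      have e01 := congrFun (hLb v01) l
      have e11 := congrFun (hLb v11) l
      rw [ind00] at e00
      rw [ind10] at e10
      rw [ind01] at e01
      rw [ind11] at e11
      simp only [map_zero, map_add, Pi.add_apply, Pi.zero_apply, zero_add] at e00 e10 e01 e11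
      have r00 : (if ψ v00 l then (1:ℤ) else 0) = 0 ∨ (if ψ v00 l then (1:ℤ) else 0) = 1 := by
        by_cases h : ψ v00 l <;> simp [h]
      have r10 : (if ψ v10 l then (1:ℤ) else 0) = 0 ∨ (if ψ v10 l then (1:ℤ) else 0) = 1 := by
        by_cases h : ψ v10 l <;> simp [h]
      have r01 : (if ψ v01 l then (1:ℤ) else 0) = 0 ∨ (if ψ v01 l then (1:ℤ) else 0) = 1 := by
        by_cases h : ψ v01 l <;> simp [h]
      have r11 : (if ψ v11 l then (1:ℤ) else 0) = 0 ∨ (if ψ v11 l then (1:ℤ) else 0) = 1 := by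
        by_cases h : ψ v11 l <;> simp [h]
      rw [e00] at r00
      rw [e10] at r10
      rw [e01] at r01
      rw [e11] at r11
      omega
    -- Some column of `L` is zero.
    have hcol : ∃ k : Fin (i+1), L (Pi.single k 1) = 0 := by
      by_contra hcon
      push_neg at hcon
      have hr : ∀ k : Fin (i+1), ∃ l, L (Pi.single k 1) l ≠ 0 := by
        intro k
        exact Function.ne_iff.mp (hcon k)
      choose r hrne using hr
      have hinj : Function.Injective r := by
        intro k k' hkk'
        by_contra hne
        exact hrow (r k) k k' hne (hrne k) (hkk' ▸ hrne k')
      have := Fintype.card_le_of_injective r hinj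
      simp only [Fintype.card_fin] at this
      omega
    obtain ⟨k, hk⟩ := hcol
    -- ψ does not depend on coordinate k.
    have hψ : ∀ v x, ψ (Function.update v k x) = ψ v := by
      intro v x
      apply aux_ind_inj
      rw [hLb, hLb]
      have hind : (fun p => if Function.update v k x p then (1:ℤ) else 0)
          = (fun p => if v p then (1:ℤ) else 0)
            + (((if x then 1 else 0) - (if v k then 1 else 0) : ℤ)) • Pi.single k 1 := by
        funext p
        simp only [Pi.add_apply, Pi.smul_apply, Pi.single_apply, smul_eq_mul]
        by_cases hp : p = k
        · subst hp
          rw [Function.update_self]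
          simp
        · rw [Function.update_of_ne hp]
          simp [hp]
      rw [hind, map_add, map_smul, hk, smul_zero, add_zero]
    exact aux_unused ψ k hψ c
  -- Step 2: apply the hypothesis with the identity morphism.
  have h2 := hφ (j+1) c hcube
  have hid : IsCubeMorphism (id : (Fin (j+1) → Bool) → (Fin (j+1) → Bool)) := by
    refine ⟨LinearMap.id, 0, fun v => ?_⟩
    simp
  have h3 := h2 id hid
  simp only [id_eq, Function.comp_apply] at h3
  -- Step 3: compute the alternating sum.
  have hsplit : ∀ v : Fin (j+1) → Bool,
      φ (c v) = φ b + (if v = (fun _ => true) then φ a - φ b else 0) := by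
    intro v
    by_cases hv : v = (fun _ => true) <;> simp [hc, hv]
  have h4 : ∑ v : Fin (j+1) → Bool, ((-1 : ℤ) ^ (∑ i, if v i then 1 else 0)) • φ (c v)
      = (∑ v : Fin (j+1) → Bool, ((-1 : ℤ) ^ (∑ i, if v i then 1 else 0))) • φ b
        + ((-1 : ℤ) ^ (j+1)) • (φ a - φ b) := by
    simp only [hsplit, smul_add]
    rw [Finset.sum_add_distrib, ← Finset.sum_smul]
    congr 1
    have : ∀ v : Fin (j+1) → Bool,
        ((-1 : ℤ) ^ (∑ i, if v i then 1 else 0)) • (if v = (fun _ => true) then φ a - φ b else 0)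
          = if v = (fun _ => true)
              then ((-1 : ℤ) ^ (∑ i, if v i then 1 else 0)) • (φ a - φ b) else 0 := by
      intro v
      by_cases hv : v = (fun _ => true) <;> simp [hv]
    simp only [this]
    rw [Finset.sum_ite_eq' Finset.univ (fun _ => true)]
    simp
  rw [h4, aux_sign_sum (Nat.succ_pos j), zero_smul, zero_add] at h3
  have h5 : φ a - φ b = 0 := by
    rcases Nat.even_or_odd (j+1) with hpar | hpar
    · rw [hpar.neg_one_pow, one_smul] at h3
      exact h3
    · rw [hpar.neg_one_pow, neg_smul, one_smul, neg_eq_zero] at h3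
      exact h3
  exact sub_eq_zero.mp h5
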